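/- (Existence and uniqueness of the Cauchy Δ-antiderivative.) For every rd-continuous function u : 𝕋 → ℝ^n there exists a unique function U : 𝕋 → ℝ^n with U(a) = 0 that is Δ-differentiable at every t ∈ 𝕋^κ with U^Δ(t) = u(t). -/

import Mathlib

open Set Filter Topology

/-- Forward jump operator of the time scale `T` (with `b = sSup T`). -/
noncomputable def tsSigma (T : Set ℝ) (t : ℝ) : ℝ :=
  if t < sSup T then sInf {s | s ∈ T ∧ t < s} else sSup T

/-- Backward jump operator of the time scale `T` (with `a = sInf T`). -/
noncomputable def tsRho (T : Set ℝ) (t : ℝ) : ℝ :=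
  if sInf T < t then sSup {s | s ∈ T ∧ s < t} else sInf T

/-- `𝕋^κ = 𝕋 \ (ρ(b), b]`. -/
def tsK (T : Set ℝ) : Set ℝ := T \ Ioc (tsRho T (sSup T)) (sSup T)

/-- `𝕋_κ = 𝕋 \ [a, σ(a))`. -/
def tsKd (T : Set ℝ) : Set ℝ := T \ Ico (sInf T) (tsSigma T (sInf T))

/-- `𝕋^κ_κ = 𝕋^κ ∩ 𝕋_κ`. -/
def tsKK (T : Set ℝ) : Set ℝ := tsK T ∩ tsKd T

/-- `u` is Δ-differentiable at `t` with Δ-derivative `L`. -/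
def HasDeltaDerivAt {E : Type*} [NormedAddCommGroup E] [NormedSpace ℝ E]
    (T : Set ℝ) (u : ℝ → E) (t : ℝ) (L : E) : Prop :=
  Tendsto (fun s => (tsSigma T t - s)⁻¹ • (u (tsSigma T t) - u s))
    (𝓝[T \ {tsSigma T t}] t) (𝓝 L)

/-- `u` is ∇-differentiable at `t` with ∇-derivative `L`. -/
def HasNablaDerivAt {E : Type*} [NormedAddCommGroup E] [NormedSpace ℝ E]
    (T : Set ℝ) (u : ℝ → E) (t : ℝ) (L : E) : Prop :=
  Tendsto (fun s => (s - tsRho T t)⁻¹ • (u s - u (tsRho T t)))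
    (𝓝[T \ {tsRho T t}] t) (𝓝 L)

/-- `u` is rd-continuous on the time scale `T`. -/
def RdContinuous {E : Type*} [NormedAddCommGroup E] [NormedSpace ℝ E]
    (T : Set ℝ) (u : ℝ → E) : Prop :=
  (∀ t ∈ T, tsSigma T t = t → ContinuousWithinAt u T t) ∧
  (∀ t ∈ T, tsRho T t = t → ∃ L : E, Tendsto u (𝓝[T ∩ Iio t] t) (𝓝 L))

/-- `u` is ld-continuous on the time scale `T`. -/
def LdContinuous {E : Type*} [NormedAddCommGroup E] [NormedSpace ℝ E]
    (T : Set ℝ) (u : ℝ → E) : Prop :=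
  (∀ t ∈ T, tsRho T t = t → ContinuousWithinAt u T t) ∧
  (∀ t ∈ T, tsSigma T t = t → ∃ L : E, Tendsto u (𝓝[T ∩ Ioi t] t) (𝓝 L))


namespace TSAux

variable {T : Set ℝ}

/-- the "floor" map onto the time scale -/
noncomputable def g (T : Set ℝ) (r : ℝ) : ℝ := sSup (T ∩ Iic (max r (sInf T)))

lemma mem_a (hclosed : IsClosed T) (hbdd : Bornology.IsBounded T) (hne : T.Nonempty) :
    sInf T ∈ T := hclosed.csInf_mem hne hbdd.bddBelow

lemma mem_b (hclosed : IsClosed T) (hbdd : Bornology.IsBounded T) (hne : T.Nonempty) :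
    sSup T ∈ T := hclosed.csSup_mem hne hbdd.bddAbove

lemma subset_Icc (hbdd : Bornology.IsBounded T) (hne : T.Nonempty) :
    T ⊆ Icc (sInf T) (sSup T) := fun _ ht =>
  ⟨csInf_le hbdd.bddBelow ht, le_csSup hbdd.bddAbove ht⟩

section g

variable (hclosed : IsClosed T) (hbdd : Bornology.IsBounded T) (hne : T.Nonempty)

lemma g_set_nonempty (hclosed : IsClosed T) (hbdd : Bornology.IsBounded T) (hne : T.Nonempty)
    (r : ℝ) : (T ∩ Iic (max r (sInf T))).Nonempty :=
  ⟨sInf T, mem_a hclosed hbdd hne, mem_Iic.2 (le_max_right _ _)⟩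

lemma g_mem (hclosed : IsClosed T) (hbdd : Bornology.IsBounded T) (hne : T.Nonempty)
    (r : ℝ) : g T r ∈ T := by
  have h1 : IsClosed (T ∩ Iic (max r (sInf T))) := hclosed.inter isClosed_Iic
  have := h1.csSup_mem (g_set_nonempty hclosed hbdd hne r)
    (hbdd.bddAbove.mono inter_subset_left)
  exact this.1

lemma g_mono (hclosed : IsClosed T) (hbdd : Bornology.IsBounded T) (hne : T.Nonempty) :
    Monotone (g T) := fun r s hrs =>
  csSup_le_csSup (hbdd.bddAbove.mono inter_subset_left)
    (g_set_nonempty hclosed hbdd hne r)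
    (inter_subset_inter_right _ (Iic_subset_Iic.2 (max_le_max_right _ hrs)))

lemma g_le (hclosed : IsClosed T) (hbdd : Bornology.IsBounded T) (hne : T.Nonempty) (r : ℝ) :
    g T r ≤ max r (sInf T) :=
  csSup_le (g_set_nonempty hclosed hbdd hne r) (fun _ h => h.2)


lemma le_g (hbdd : Bornology.IsBounded T) {t r : ℝ} (ht : t ∈ T) (htr : t ≤ r) :
    t ≤ g T r := le_csSup (hbdd.bddAbove.mono inter_subset_left)
  ⟨ht, mem_Iic.2 (le_max_of_le_left htr)⟩

lemma a_le_g (hbdd : Bornology.IsBounded T) (hne : T.Nonempty) (haT : sInf T ∈ T) (r : ℝ) :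
    sInf T ≤ g T r := le_csSup (hbdd.bddAbove.mono inter_subset_left)
  ⟨haT, mem_Iic.2 (le_max_right _ _)⟩

/-- If `t ∈ T`, `t ≤ r` and there is no point of `T` in `(t, r]`, then `g T r = t`. -/
lemma g_eq_of_gap (hclosed : IsClosed T) (hbdd : Bornology.IsBounded T) (hne : T.Nonempty)
    {t r : ℝ} (ht : t ∈ T) (htr : t ≤ r) (hgap : T ∩ Ioc t r = ∅) : g T r = t := by
  have ha : sInf T ≤ t := csInf_le hbdd.bddBelow ht
  have hmax : max r (sInf T) = r := max_eq_left (ha.trans htr)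
  refine le_antisymm ?_ (le_g hbdd ht htr)
  refine csSup_le (g_set_nonempty hclosed hbdd hne r) (fun x hx => ?_)
  by_contra hlt
  push_neg at hlt
  have : x ∈ T ∩ Ioc t r := ⟨hx.1, hlt, by simpa [hmax] using hx.2⟩
  rw [hgap] at this
  exact this.elim

lemma g_self (hclosed : IsClosed T) (hbdd : Bornology.IsBounded T) (hne : T.Nonempty)
    {r : ℝ} (hr : r ∈ T) : g T r = r :=
  g_eq_of_gap hclosed hbdd hne hr le_rfl (by
    ext x
    simp only [mem_inter_iff, mem_Ioc, mem_empty_iff_false, iff_false, not_and]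
    rintro - h1 h2
    exact absurd h2 (not_le.2 h1))

end g

section sigma

variable (hclosed : IsClosed T) (hbdd : Bornology.IsBounded T) (hne : T.Nonempty)

lemma sigma_eq_of_lt {t : ℝ} (h : t < sSup T) :
    tsSigma T t = sInf {s | s ∈ T ∧ t < s} := if_pos h

lemma sigma_b : tsSigma T (sSup T) = sSup T := if_neg (lt_irrefl _)

lemma sigma_mem (hclosed : IsClosed T) (hbdd : Bornology.IsBounded T) (hne : T.Nonempty)
    {t : ℝ} : tsSigma T t ∈ T := by
  rcases lt_or_ge t (sSup T) with h | h
  · rw [sigma_eq_of_lt h]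
    have hne' : {s | s ∈ T ∧ t < s}.Nonempty := ⟨sSup T, mem_b hclosed hbdd hne, h⟩
    have hbb : BddBelow {s | s ∈ T ∧ t < s} := hbdd.bddBelow.mono (fun x hx => hx.1)
    have h1 : sInf {s | s ∈ T ∧ t < s} ∈ closure {s | s ∈ T ∧ t < s} :=
      csInf_mem_closure hne' hbb
    have h2 : closure {s | s ∈ T ∧ t < s} ⊆ T :=
      closure_minimal (fun x hx => hx.1) hclosed
    exact h2 h1
  · rw [tsSigma, if_neg (not_lt.2 h)]; exact mem_b hclosed hbdd hne

lemma le_sigma (hclosed : IsClosed T) (hbdd : Bornology.IsBounded T) (hne : T.Nonempty)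
    {t : ℝ} (ht : t ∈ T) : t ≤ tsSigma T t := by
  rcases lt_or_ge t (sSup T) with h | h
  · rw [sigma_eq_of_lt h]
    exact le_csInf ⟨sSup T, mem_b hclosed hbdd hne, h⟩ (fun x hx => hx.2.le)
  · rw [tsSigma, if_neg (not_lt.2 h)]
    exact le_csSup hbdd.bddAbove ht

lemma sigma_le_b (hclosed : IsClosed T) (hbdd : Bornology.IsBounded T) (hne : T.Nonempty)
    {t : ℝ} : tsSigma T t ≤ sSup T :=
  le_csSup hbdd.bddAbove (sigma_mem hclosed hbdd hne)

lemma sigma_gap (hbdd : Bornology.IsBounded T) {t : ℝ} : T ∩ Ioo t (tsSigma T t) = ∅ := by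
  ext x
  simp only [mem_inter_iff, mem_Ioo, mem_empty_iff_false, iff_false, not_and]
  rintro hx h1 h2
  rcases lt_or_ge t (sSup T) with h | h
  · rw [sigma_eq_of_lt h] at h2
    have hbb : BddBelow {s | s ∈ T ∧ t < s} := hbdd.bddBelow.mono (fun y hy => hy.1)
    have : sInf {s | s ∈ T ∧ t < s} ≤ x := csInf_le hbb ⟨hx, h1⟩
    linarith
  · rw [tsSigma, if_neg (not_lt.2 h)] at h2
    have : x ≤ sSup T := le_csSup hbdd.bddAbove hx
    linarith

lemma sigma_gap_Ioc (hbdd : Bornology.IsBounded T) {t r : ℝ} (ht : t ∈ T) (hr : r < tsSigma T t) :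
    T ∩ Ioc t r = ∅ := by
  ext x
  simp only [mem_inter_iff, mem_Ioc, mem_empty_iff_false, iff_false, not_and]
  rintro hx h1 h2
  have : x ∈ T ∩ Ioo t (tsSigma T t) := ⟨hx, h1, lt_of_le_of_lt h2 hr⟩
  rw [sigma_gap hbdd] at this
  exact this.elim

lemma g_eq_left (hclosed : IsClosed T) (hbdd : Bornology.IsBounded T) (hne : T.Nonempty)
    {t r : ℝ} (ht : t ∈ T) (htr : t ≤ r) (hr : r < tsSigma T t) : g T r = t :=
  g_eq_of_gap hclosed hbdd hne ht htr (sigma_gap_Ioc hbdd ht hr)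

/-- If `t` is right-dense (`σ t = t`) and `t < sSup T`, points of `T` to the right accumulate. -/
lemma right_dense_approx (hclosed : IsClosed T) (hbdd : Bornology.IsBounded T) (hne : T.Nonempty)
    {t : ℝ} (hb : t < sSup T) (hsig : tsSigma T t = t) {δ : ℝ} (hδ : 0 < δ) :
    ∃ d ∈ T, t < d ∧ d < t + δ := by
  have h1 : sInf {s | s ∈ T ∧ t < s} < t + δ := by
    rw [← sigma_eq_of_lt hb, hsig]; linarith
  obtain ⟨d, hd, hd2⟩ := exists_lt_of_csInf_lt (⟨sSup T, mem_b hclosed hbdd hne, hb⟩ : {s | s ∈ T ∧ t < s}.Nonempty) h1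
  exact ⟨d, hd.1, hd.2, hd2⟩

lemma rho_b_eq (hab : sInf T < sSup T) : tsRho T (sSup T) = sSup {s | s ∈ T ∧ s < sSup T} :=
  if_pos hab

lemma rho_b_gap (hbdd : Bornology.IsBounded T) (hne : T.Nonempty) :
    T ∩ Ioo (tsRho T (sSup T)) (sSup T) = ∅ := by
  ext x
  simp only [mem_inter_iff, mem_Ioo, mem_empty_iff_false, iff_false, not_and]
  rintro hx h1 h2
  rcases lt_or_ge (sInf T) (sSup T) with hab | hab
  · rw [rho_b_eq hab] at h1
    have : x ≤ sSup {s | s ∈ T ∧ s < sSup T} :=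
      le_csSup (hbdd.bddAbove.mono (fun y hy => hy.1)) ⟨hx, h2⟩
    linarith
  · rw [tsRho, if_neg (not_lt.2 hab)] at h1
    have h3 : sInf T ≤ x := csInf_le hbdd.bddBelow hx
    linarith

lemma mem_tsK_of_lt (hbdd : Bornology.IsBounded T) (hne : T.Nonempty)
    {t : ℝ} (ht : t ∈ T) (hlt : t < sSup T) : t ∈ tsK T := by
  refine ⟨ht, fun hIoc => ?_⟩
  have : t ∈ T ∩ Ioo (tsRho T (sSup T)) (sSup T) := ⟨ht, hIoc.1, hlt⟩
  rw [rho_b_gap hbdd hne] at this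
  exact this.elim

lemma mem_tsK_or (hbdd : Bornology.IsBounded T) (hne : T.Nonempty)
    {t : ℝ} (ht : t ∈ T) :
    t ∈ tsK T ∨ (t = sSup T ∧ tsRho T (sSup T) < sSup T) := by
  rcases lt_or_ge t (sSup T) with hlt | hge
  · exact Or.inl (mem_tsK_of_lt hbdd hne ht hlt)
  · have hteq : t = sSup T := le_antisymm (le_csSup hbdd.bddAbove ht) hge
    by_cases h : tsRho T (sSup T) < sSup T
    · exact Or.inr ⟨hteq, h⟩
    · refine Or.inl ⟨ht, fun hIoc => ?_⟩
      exact absurd (lt_of_lt_of_le hIoc.1 hIoc.2) h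

end sigma

section meas

/-- right-scattered points -/
def rsSet (T : Set ℝ) : Set ℝ := {t | t ∈ T ∧ t < tsSigma T t}

/-- points with no points of `T` immediately to the left -/
def lsSet (T : Set ℝ) : Set ℝ := {t | t ∈ T ∧ ∃ l, l < t ∧ T ∩ Ioo l t = ∅}

def badSet (T : Set ℝ) : Set ℝ := rsSet T ∪ lsSet T

lemma sigma_le_of_mem (hbdd : Bornology.IsBounded T) {x y : ℝ} (hy : y ∈ T) (hxy : x < y) :
    tsSigma T x ≤ y := by
  have hxb : x < sSup T := lt_of_lt_of_le hxy (le_csSup hbdd.bddAbove hy)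
  rw [sigma_eq_of_lt hxb]
  exact csInf_le (hbdd.bddBelow.mono (fun z hz => hz.1)) ⟨hy, hxy⟩

lemma countable_rsSet (hbdd : Bornology.IsBounded T) : (rsSet T).Countable := by
  apply Set.PairwiseDisjoint.countable_of_isOpen (s := fun t => Ioo t (tsSigma T t))
  · intro x hx y hy hxy
    rcases hxy.lt_or_gt with h | h
    · refine Set.disjoint_left.2 (fun z hz1 hz2 => ?_)
      have hs : tsSigma T x ≤ y := sigma_le_of_mem hbdd hy.1 h
      obtain ⟨hz1a, hz1b⟩ := hz1
      obtain ⟨hz2a, hz2b⟩ := hz2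
      linarith
    · refine Set.disjoint_left.2 (fun z hz1 hz2 => ?_)
      have hs : tsSigma T y ≤ x := sigma_le_of_mem hbdd hx.1 h
      obtain ⟨hz1a, hz1b⟩ := hz1
      obtain ⟨hz2a, hz2b⟩ := hz2
      linarith
  · exact fun i _ => isOpen_Ioo
  · exact fun i hi => nonempty_Ioo.2 hi.2

lemma countable_lsSet : (lsSet T).Countable := by
  have hch : ∀ t ∈ lsSet T, ∃ l, l < t ∧ T ∩ Ioo l t = ∅ := fun t ht => ht.2
  choose! l hl1 hl2 using hch
  apply Set.PairwiseDisjoint.countable_of_isOpen (s := fun t => Ioo (l t) t)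
  · intro x hx y hy hxy
    rcases hxy.lt_or_gt with h | h
    · refine Set.disjoint_left.2 (fun z hz1 hz2 => ?_)
      have hxly : x ≤ l y := by
        by_contra hc
        push_neg at hc
        have : x ∈ T ∩ Ioo (l y) y := ⟨hx.1, hc, h⟩
        rw [hl2 y hy] at this
        exact this.elim
      obtain ⟨hz1a, hz1b⟩ := hz1
      obtain ⟨hz2a, hz2b⟩ := hz2
      linarith
    · refine Set.disjoint_left.2 (fun z hz1 hz2 => ?_)
      have hylx : y ≤ l x := by
        by_contra hc
        push_neg at hc
        have : y ∈ T ∩ Ioo (l x) x := ⟨hy.1, hc, h⟩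
        rw [hl2 x hx] at this
        exact this.elim
      obtain ⟨hz1a, hz1b⟩ := hz1
      obtain ⟨hz2a, hz2b⟩ := hz2
      linarith
  · exact fun i _ => isOpen_Ioo
  · exact fun i hi => nonempty_Ioo.2 (hl1 i hi)

lemma countable_badSet (hbdd : Bornology.IsBounded T) : (badSet T).Countable :=
  (countable_rsSet hbdd).union countable_lsSet

end meas

section cont

variable {E : Type*} [NormedAddCommGroup E] [NormedSpace ℝ E]

lemma g_gap (hclosed : IsClosed T) (hbdd : Bornology.IsBounded T) (hne : T.Nonempty) (r : ℝ) :
    T ∩ Ioc (g T r) (max r (sInf T)) = ∅ := by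
  ext x
  simp only [mem_inter_iff, mem_Ioc, mem_empty_iff_false, iff_false, not_and]
  rintro hx h1 h2
  have : x ≤ g T r := le_csSup (hbdd.bddAbove.mono inter_subset_left) ⟨hx, mem_Iic.2 h2⟩
  linarith

lemma g_const_above (hclosed : IsClosed T) (hbdd : Bornology.IsBounded T) (hne : T.Nonempty)
    {r : ℝ} (hb : sSup T ≤ r) : g T r = sSup T := by
  refine g_eq_of_gap hclosed hbdd hne (mem_b hclosed hbdd hne) hb ?_
  ext x
  simp only [mem_inter_iff, mem_Ioc, mem_empty_iff_false, iff_false, not_and]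
  rintro hx h1 h2
  exact absurd (le_csSup hbdd.bddAbove hx) (not_le.2 h1)

lemma g_const_below (hclosed : IsClosed T) (hbdd : Bornology.IsBounded T) (hne : T.Nonempty)
    {r : ℝ} (hb : r ≤ sInf T) : g T r = sInf T := by
  have : max r (sInf T) = sInf T := max_eq_right hb
  rw [g, this]
  have hset : T ∩ Iic (sInf T) = {sInf T} := by
    ext x
    simp only [mem_inter_iff, mem_Iic, mem_singleton_iff]
    constructor
    · rintro ⟨hx, hle⟩
      exact le_antisymm hle (csInf_le hbdd.bddBelow hx)
    · rintro rfl
      exact ⟨mem_a hclosed hbdd hne, le_rfl⟩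
  rw [hset, csSup_singleton]

lemma continuousAt_ug (hclosed : IsClosed T) (hbdd : Bornology.IsBounded T) (hne : T.Nonempty)
    {u : ℝ → E} (hu : RdContinuous T u) {r : ℝ} (hr : r ∉ badSet T) :
    ContinuousAt (fun x => u (g T x)) r := by
  have haT := mem_a hclosed hbdd hne
  have hbT := mem_b hclosed hbdd hne
  by_cases hrT : r ∈ T
  · -- r is a point of T, right-dense and left-dense
    have hσ : tsSigma T r = r := by
      by_contra h
      exact hr (Or.inl ⟨hrT, lt_of_le_of_ne (le_sigma hclosed hbdd hne hrT) (Ne.symm h)⟩)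
    have hld : ∀ δ, 0 < δ → (T ∩ Ioo (r - δ) r).Nonempty := by
      intro δ hδ
      rw [nonempty_iff_ne_empty]
      intro hemp
      exact hr (Or.inr ⟨hrT, r - δ, by linarith, hemp⟩)
    have hcw : ContinuousWithinAt u T r := hu.1 r hrT hσ
    rw [Metric.continuousAt_iff]
    intro ε hε
    rw [Metric.continuousWithinAt_iff] at hcw
    obtain ⟨δ1, hδ1, hδ1'⟩ := hcw ε hε
    obtain ⟨p0, hp0T, hp0a, hp0b⟩ := hld δ1 hδ1
    have har : sInf T ≤ r := csInf_le hbdd.bddBelow hrT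
    have hap0 : sInf T ≤ p0 := csInf_le hbdd.bddBelow hp0T
    refine ⟨min (r - p0) δ1, lt_min (by linarith) hδ1, fun {x} hx => ?_⟩
    rw [Real.dist_eq] at hx
    have hx1 : |x - r| < r - p0 := lt_of_lt_of_le hx (min_le_left _ _)
    have hx2 : |x - r| < δ1 := lt_of_lt_of_le hx (min_le_right _ _)
    rw [abs_lt] at hx1 hx2
    have key : dist (g T x) r < δ1 := by
      rcases le_or_gt r x with hcase | hcase
      · have h1 : r ≤ g T x := le_g hbdd hrT hcase
        have h2 : g T x ≤ x := by
          have := g_le hclosed hbdd hne x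
          rwa [max_eq_left (har.trans hcase)] at this
        rw [Real.dist_eq, abs_of_nonneg (by linarith)]
        linarith
      · have hp0x : p0 ≤ x := by linarith
        have h1 : p0 ≤ g T x := le_g hbdd hp0T hp0x
        have h2 : g T x ≤ x := by
          have := g_le hclosed hbdd hne x
          rwa [max_eq_left (hap0.trans hp0x)] at this
        rw [Real.dist_eq, abs_of_nonpos (by linarith)]
        linarith
    have := hδ1' (g_mem hclosed hbdd hne x) key
    rwa [g_self hclosed hbdd hne hrT]
  · rcases lt_or_ge r (sInf T) with hra | hra
    · -- below a : locally constant
      have : (fun x => u (g T x)) =ᶠ[𝓝 r] fun _ => u (sInf T) := by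
        filter_upwards [Iio_mem_nhds hra] with x hx
        rw [g_const_below hclosed hbdd hne (le_of_lt hx)]
      exact this.continuousAt
    · rcases lt_or_ge (sSup T) r with hrb | hrb
      · have : (fun x => u (g T x)) =ᶠ[𝓝 r] fun _ => u (sSup T) := by
          filter_upwards [Ioi_mem_nhds hrb] with x hx
          rw [g_const_above hclosed hbdd hne (le_of_lt hx)]
        exact this.continuousAt
      · -- r is in a gap of T
        have hrb' : r < sSup T := lt_of_le_of_ne hrb (fun h => hrT (h ▸ hbT))
        set l := g T r with hl
        have hlT : l ∈ T := g_mem hclosed hbdd hne r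
        have hmax : max r (sInf T) = r := max_eq_left hra
        have hlr : l < r := by
          have h1 : l ≤ r := by
            have := g_le hclosed hbdd hne r
            rwa [hmax] at this
          exact lt_of_le_of_ne h1 (fun h => hrT (h ▸ hlT))
        have hgap : T ∩ Ioc l r = ∅ := by
          have := g_gap hclosed hbdd hne r
          rwa [hmax] at this
        have hrσ : r < tsSigma T l := by
          have hlb : l < sSup T := lt_trans hlr hrb'
          rw [sigma_eq_of_lt hlb]
          have h1 : r ≤ sInf {s | s ∈ T ∧ l < s} := by
            refine le_csInf ⟨sSup T, hbT, hlb⟩ (fun x hx => ?_)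
            by_contra hc
            push_neg at hc
            have : x ∈ T ∩ Ioc l r := ⟨hx.1, hx.2, le_of_lt hc⟩
            rw [hgap] at this
            exact this.elim
          refine lt_of_le_of_ne h1 (fun h => hrT ?_)
          rw [← sigma_eq_of_lt hlb] at h
          exact h ▸ sigma_mem hclosed hbdd hne
        have : (fun x => u (g T x)) =ᶠ[𝓝 r] fun _ => u l := by
          filter_upwards [Ioo_mem_nhds hlr hrσ] with x hx
          rw [g_eq_left hclosed hbdd hne hlT (le_of_lt hx.1) hx.2]
        exact this.continuousAt

lemma aesm_ug (hclosed : IsClosed T) (hbdd : Bornology.IsBounded T) (hne : T.Nonempty)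
    {u : ℝ → E} (hu : RdContinuous T u) :
    MeasureTheory.AEStronglyMeasurable (fun x => u (g T x)) MeasureTheory.volume := by
  have hD := countable_badSet (T := T) hbdd
  have hmeas : MeasurableSet (badSet T)ᶜ := hD.measurableSet.compl
  have hcont : ContinuousOn (fun x => u (g T x)) (badSet T)ᶜ := fun x hx =>
    (continuousAt_ug hclosed hbdd hne hu hx).continuousWithinAt
  have h1 : MeasureTheory.AEStronglyMeasurable (fun x => u (g T x))
      (MeasureTheory.volume.restrict (badSet T)ᶜ) := hcont.aestronglyMeasurable hmeas
  rwa [MeasureTheory.Measure.restrict_eq_self_of_ae_mem ?hae] at h1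
  case hae =>
    have h0 : MeasureTheory.volume (badSet T) = 0 := hD.measure_zero _
    have := (MeasureTheory.measure_eq_zero_iff_ae_notMem (μ := MeasureTheory.volume)
      (s := badSet T)).1 h0
    filter_upwards [this] with x hx using hx

lemma bounded_ug (hclosed : IsClosed T) (hbdd : Bornology.IsBounded T) (hne : T.Nonempty)
    {u : ℝ → E} (hu : RdContinuous T u) :
    ∃ M, ∀ r ∈ Icc (sInf T) (sSup T), ‖u (g T r)‖ ≤ M := by
  have haT := mem_a hclosed hbdd hne
  have hbT := mem_b hclosed hbdd hne
  have key : ∀ x ∈ Icc (sInf T) (sSup T), ∃ t ∈ 𝓝[Icc (sInf T) (sSup T)] x,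
      ∃ M, ∀ r ∈ t, ‖u (g T r)‖ ≤ M := by
    intro x hx
    by_cases hb : x ∈ badSet T
    · have hxT : x ∈ T := hb.elim (fun h => h.1) (fun h => h.1)
      have hax : sInf T ≤ x := csInf_le hbdd.bddBelow hxT
      -- right-hand bound
      have hright : ∃ q, x < q ∧ ∃ Mr, ∀ y, x ≤ y → y < q → ‖u (g T y)‖ ≤ Mr := by
        rcases eq_or_lt_of_le (le_sigma hclosed hbdd hne hxT) with hσ | hσ
        · -- right-dense
          have hcw := hu.1 x hxT hσ.symm
          rw [Metric.continuousWithinAt_iff] at hcw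
          obtain ⟨δ1, hδ1, hδ1'⟩ := hcw 1 one_pos
          refine ⟨x + δ1, by linarith, ‖u x‖ + 1, fun y hy1 hy2 => ?_⟩
          have h1 : x ≤ g T y := le_g hbdd hxT hy1
          have h2 : g T y ≤ y := by
            have := g_le hclosed hbdd hne y
            rwa [max_eq_left (hax.trans hy1)] at this
          have hd : dist (g T y) x < δ1 := by
            rw [Real.dist_eq, abs_of_nonneg (by linarith)]
            linarith
          have := hδ1' (g_mem hclosed hbdd hne y) hd
          rw [dist_eq_norm] at this
          calc ‖u (g T y)‖ = ‖(u (g T y) - u x) + u x‖ := by rw [sub_add_cancel]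
            _ ≤ ‖u (g T y) - u x‖ + ‖u x‖ := norm_add_le _ _
            _ ≤ ‖u x‖ + 1 := by linarith
        · refine ⟨tsSigma T x, hσ, ‖u x‖, fun y hy1 hy2 => ?_⟩
          rw [g_eq_left hclosed hbdd hne hxT hy1 hy2]
      -- left-hand bound
      have hleft : ∃ p, p < x ∧ ∃ Ml, ∀ y, p < y → y < x → ‖u (g T y)‖ ≤ Ml := by
        by_cases hgap : ∃ l, l < x ∧ T ∩ Ioo l x = ∅
        · obtain ⟨l, hl, hgap⟩ := hgap
          rcases eq_or_lt_of_le hax with hxa | hxa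
          · -- x = a
            refine ⟨x - 1, by linarith, ‖u (sInf T)‖, fun y hy1 hy2 => ?_⟩
            rw [g_const_below hclosed hbdd hne (by linarith [hxa.symm ▸ hy2.le] : y ≤ sInf T)]
          · -- a < x ; then a ≤ l
            have hal : sInf T ≤ l := by
              by_contra hc
              push_neg at hc
              have : sInf T ∈ T ∩ Ioo l x := ⟨haT, hc, hxa⟩
              rw [hgap] at this
              exact this.elim
            set m := g T l with hm
            have hmT : m ∈ T := g_mem hclosed hbdd hne l
            have hml : m ≤ l := by
              have := g_le hclosed hbdd hne l
              rwa [max_eq_left hal] at this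
            refine ⟨l, hl, ‖u m‖, fun y hy1 hy2 => ?_⟩
            have hgy : g T y = m := by
              refine g_eq_of_gap hclosed hbdd hne hmT (hml.trans (le_of_lt hy1)) ?_
              ext z
              simp only [mem_inter_iff, mem_Ioc, mem_empty_iff_false, iff_false, not_and]
              rintro hz h1 h2
              rcases le_or_gt z l with hzl | hzl
              · have : z ∈ T ∩ Ioc m (max l (sInf T)) := ⟨hz, h1, by rw [max_eq_left hal]; exact hzl⟩
                rw [g_gap hclosed hbdd hne l] at this
                exact this.elim
              · have : z ∈ T ∩ Ioo l x := ⟨hz, hzl, lt_of_le_of_lt h2 hy2⟩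
                rw [hgap] at this
                exact this.elim
            rw [hgy]
        · -- left-dense
          push_neg at hgap
          have hax' : sInf T < x := by
            rcases eq_or_lt_of_le hax with h | h
            · exfalso
              obtain ⟨z, hzT, hz1, hz2⟩ := hgap (x - 1) (by linarith)
              exact absurd (csInf_le hbdd.bddBelow hzT) (not_le.2 (h ▸ hz2))
            · exact h
          have hρ : tsRho T x = x := by
            rw [tsRho, if_pos hax']
            refine le_antisymm (csSup_le ⟨sInf T, haT, hax'⟩ (fun z hz => hz.2.le)) ?_
            by_contra hc
            push_neg at hc
            set m := sSup {s | s ∈ T ∧ s < x} with hmdef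
            obtain ⟨z, hzT, hz1, hz2⟩ := hgap m hc
            exact absurd (le_csSup (hbdd.bddAbove.mono (fun w hw => hw.1)) (⟨hzT, hz2⟩ : z ∈ {s | s ∈ T ∧ s < x})) (not_le.2 hz1)
          obtain ⟨L, hL⟩ := hu.2 x hxT hρ
          rw [Metric.tendsto_nhdsWithin_nhds] at hL
          obtain ⟨δ2, hδ2, hδ2'⟩ := hL 1 one_pos
          obtain ⟨p0, hp0⟩ : (T ∩ Ioo (x - δ2) x).Nonempty := hgap (x - δ2) (by linarith)
          refine ⟨p0, hp0.2.2, ‖L‖ + 1, fun y hy1 hy2 => ?_⟩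
          have hp0T := hp0.1
          have h1 : p0 ≤ g T y := le_g hbdd hp0T (le_of_lt hy1)
          have h2 : g T y ≤ y := by
            have := g_le hclosed hbdd hne y
            rwa [max_eq_left ((csInf_le hbdd.bddBelow hp0T).trans (le_of_lt hy1))] at this
          have hmem : g T y ∈ T ∩ Iio x := ⟨g_mem hclosed hbdd hne y, by
            simp only [mem_Iio]; linarith⟩
          have hd : dist (g T y) x < δ2 := by
            rw [Real.dist_eq, abs_of_nonpos (by linarith), neg_sub]
            have := hp0.2.1
            linarith
          have := hδ2' hmem hd
          rw [dist_eq_norm] at this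
          calc ‖u (g T y)‖ = ‖(u (g T y) - L) + L‖ := by rw [sub_add_cancel]
            _ ≤ ‖u (g T y) - L‖ + ‖L‖ := norm_add_le _ _
            _ ≤ ‖L‖ + 1 := by linarith
      obtain ⟨q, hq, Mr, hMr⟩ := hright
      obtain ⟨p, hp, Ml, hMl⟩ := hleft
      refine ⟨Ioo p q, mem_nhdsWithin_of_mem_nhds (Ioo_mem_nhds hp hq), max Ml Mr, fun y hy => ?_⟩
      rcases lt_or_ge y x with h | h
      · exact le_trans (hMl y hy.1 h) (le_max_left _ _)
      · exact le_trans (hMr y h hy.2) (le_max_right _ _)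
    · -- continuity point
      have hc := continuousAt_ug hclosed hbdd hne hu hb
      rw [Metric.continuousAt_iff] at hc
      obtain ⟨δ, hδ, hδ'⟩ := hc 1 one_pos
      refine ⟨Metric.ball x δ, mem_nhdsWithin_of_mem_nhds (Metric.ball_mem_nhds x hδ),
        ‖u (g T x)‖ + 1, fun y hy => ?_⟩
      have := hδ' (by rwa [Metric.mem_ball] at hy)
      rw [dist_eq_norm] at this
      calc ‖u (g T y)‖ = ‖(u (g T y) - u (g T x)) + u (g T x)‖ := by rw [sub_add_cancel]
        _ ≤ ‖u (g T y) - u (g T x)‖ + ‖u (g T x)‖ := norm_add_le _ _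
        _ ≤ ‖u (g T x)‖ + 1 := by linarith
  exact IsCompact.induction_on isCompact_Icc ⟨0, fun r hr => hr.elim⟩
    (fun s t hst ⟨M, hM⟩ => ⟨M, fun r hr => hM r (hst hr)⟩)
    (fun s t ⟨M1, hM1⟩ ⟨M2, hM2⟩ => ⟨max M1 M2, fun r hr => hr.elim
      (fun h => le_trans (hM1 r h) (le_max_left _ _))
      (fun h => le_trans (hM2 r h) (le_max_right _ _))⟩) key

end cont

section primitive

open MeasureTheory intervalIntegral

variable {E : Type*} [NormedAddCommGroup E] [NormedSpace ℝ E] [CompleteSpace E]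

/-- the candidate antiderivative -/
noncomputable def P (T : Set ℝ) (u : ℝ → E) (t : ℝ) : E := ∫ s in (sInf T)..t, u (g T s)

variable {u : ℝ → E}

lemma intInt (hclosed : IsClosed T) (hbdd : Bornology.IsBounded T) (hne : T.Nonempty)
    (hu : RdContinuous T u) {x y : ℝ} (hx : x ∈ Icc (sInf T) (sSup T))
    (hy : y ∈ Icc (sInf T) (sSup T)) :
    IntervalIntegrable (fun s => u (g T s)) volume x y := by
  obtain ⟨M, hM⟩ := bounded_ug hclosed hbdd hne hu
  rw [intervalIntegrable_iff]
  refine Measure.integrableOn_of_bounded (M := M) (by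
    refine ne_of_lt (lt_of_le_of_lt (measure_mono Set.uIoc_subset_uIcc) ?_)
    exact measure_Icc_lt_top) (aesm_ug hclosed hbdd hne hu) ?_
  · refine (ae_restrict_iff' measurableSet_uIoc).2 (Eventually.of_forall (fun z hz => ?_))
    have hzIcc : z ∈ Icc (sInf T) (sSup T) := by
      rcases le_total x y with h | h
      · rw [uIoc_of_le h] at hz
        exact ⟨le_of_lt (lt_of_le_of_lt hx.1 hz.1), hz.2.trans hy.2⟩
      · rw [uIoc_of_ge h] at hz
        exact ⟨le_of_lt (lt_of_le_of_lt hy.1 hz.1), hz.2.trans hx.2⟩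
    exact hM z hzIcc

lemma P_sub (hclosed : IsClosed T) (hbdd : Bornology.IsBounded T) (hne : T.Nonempty)
    (hu : RdContinuous T u) {x y : ℝ} (hx : x ∈ Icc (sInf T) (sSup T))
    (hy : y ∈ Icc (sInf T) (sSup T)) :
    P T u y - P T u x = ∫ s in x..y, u (g T s) :=
  integral_interval_sub_left (intInt hclosed hbdd hne hu (left_mem_Icc.2 (hx.1.trans hx.2)) hy)
    (intInt hclosed hbdd hne hu (left_mem_Icc.2 (hx.1.trans hx.2)) hx)

lemma P_lipschitz (hclosed : IsClosed T) (hbdd : Bornology.IsBounded T) (hne : T.Nonempty)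
    (hu : RdContinuous T u) :
    ∃ M, ∀ x ∈ Icc (sInf T) (sSup T), ∀ y ∈ Icc (sInf T) (sSup T),
      ‖P T u y - P T u x‖ ≤ M * |y - x| := by
  obtain ⟨M, hM⟩ := bounded_ug hclosed hbdd hne hu
  refine ⟨M, fun x hx y hy => ?_⟩
  rw [P_sub hclosed hbdd hne hu hx hy]
  refine norm_integral_le_of_norm_le_const (fun z hz => ?_)
  refine hM z ?_
  rcases le_total x y with h | h
  · rw [uIoc_of_le h] at hz
    exact ⟨le_of_lt (lt_of_le_of_lt hx.1 hz.1), hz.2.trans hy.2⟩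
  · rw [uIoc_of_ge h] at hz
    exact ⟨le_of_lt (lt_of_le_of_lt hy.1 hz.1), hz.2.trans hx.2⟩

lemma P_continuousWithinAt (hclosed : IsClosed T) (hbdd : Bornology.IsBounded T) (hne : T.Nonempty)
    (hu : RdContinuous T u) {t : ℝ} (ht : t ∈ Icc (sInf T) (sSup T)) :
    ContinuousWithinAt (P T u) (Icc (sInf T) (sSup T)) t := by
  obtain ⟨M, hM⟩ := P_lipschitz hclosed hbdd hne hu
  rw [Metric.continuousWithinAt_iff]
  intro ε hε
  refine ⟨ε / (max M 0 + 1), by positivity, fun y hy hd => ?_⟩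
  rw [dist_eq_norm]
  calc ‖P T u y - P T u t‖ ≤ M * |y - t| := hM t ht y hy
    _ ≤ (max M 0) * |y - t| := by
        apply mul_le_mul_of_nonneg_right (le_max_left _ _) (abs_nonneg _)
    _ < ε := by
        rw [Real.dist_eq] at hd
        have h1 : (max M 0) * |y - t| ≤ (max M 0) * (ε / (max M 0 + 1)) :=
          mul_le_mul_of_nonneg_left (le_of_lt hd) (le_max_right _ _)
        have h2 : (max M 0) * (ε / (max M 0 + 1)) < ε := by
          rw [div_eq_inv_mul]
          have hpos : (0:ℝ) < max M 0 + 1 := by positivity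
          rw [mul_comm ((max M 0 + 1)⁻¹) ε, ← mul_assoc]
          have : max M 0 * (max M 0 + 1)⁻¹ < 1 := by
            rw [mul_inv_lt_iff₀ hpos, one_mul]
            linarith [le_max_right M 0]
          nlinarith [hε, this]
        linarith
    

/-- value of the primitive increment over a gap -/
lemma P_gap (hclosed : IsClosed T) (hbdd : Bornology.IsBounded T) (hne : T.Nonempty)
    (hu : RdContinuous T u) {t : ℝ} (ht : t ∈ T) (hlt : t < tsSigma T t) :
    P T u (tsSigma T t) - P T u t = (tsSigma T t - t) • u t := by
  have htIcc := subset_Icc hbdd hne ht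
  have hσIcc := subset_Icc hbdd hne (sigma_mem (t := t) hclosed hbdd hne)
  rw [P_sub hclosed hbdd hne hu htIcc hσIcc]
  have hcongr : ∫ s in t..(tsSigma T t), u (g T s) = ∫ s in t..(tsSigma T t), u t := by
    refine integral_congr_ae ?_
    have h0 : volume ({tsSigma T t} : Set ℝ) = 0 := Real.volume_singleton
    filter_upwards [(measure_eq_zero_iff_ae_notMem (μ := volume)).1 h0] with z hz hzm
    rw [uIoc_of_le (le_of_lt hlt)] at hzm
    have hzlt : z < tsSigma T t := lt_of_le_of_ne hzm.2 (by simpa using hz)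
    rw [g_eq_left hclosed hbdd hne ht (le_of_lt hzm.1) hzlt]
  rw [hcongr, intervalIntegral.integral_const]

end primitive

section deriv

open MeasureTheory intervalIntegral

variable {E : Type*} [NormedAddCommGroup E] [NormedSpace ℝ E] [CompleteSpace E] {u : ℝ → E}

lemma hasDeltaDerivAt_P (hclosed : IsClosed T) (hbdd : Bornology.IsBounded T) (hne : T.Nonempty)
    (hu : RdContinuous T u) {t : ℝ} (ht : t ∈ tsK T) :
    HasDeltaDerivAt T (P T u) t (u t) := by
  have htT := ht.1
  have htIcc := subset_Icc hbdd hne htT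
  rcases eq_or_lt_of_le (le_sigma hclosed hbdd hne htT) with hσ | hσ
  · -- right-dense case
    unfold HasDeltaDerivAt
    rw [← hσ]
    rw [Metric.tendsto_nhdsWithin_nhds]
    intro ε hε
    have hcw := hu.1 t htT hσ.symm
    rw [Metric.continuousWithinAt_iff] at hcw
    obtain ⟨δ, hδ, hδ'⟩ := hcw (ε / 2) (by linarith)
    refine ⟨δ, hδ, fun {s} hs hd => ?_⟩
    obtain ⟨hsT, hsne⟩ := hs
    rw [mem_singleton_iff] at hsne
    have hsIcc := subset_Icc hbdd hne hsT
    have hts : t - s ≠ 0 := sub_ne_zero.2 (Ne.symm hsne)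
    have hint1 : IntervalIntegrable (fun z => u (g T z)) volume s t :=
      intInt hclosed hbdd hne hu hsIcc htIcc
    have hint2 : IntervalIntegrable (fun _ => u t) volume s t := intervalIntegrable_const
    have hPsub : P T u t - P T u s = ∫ z in s..t, u (g T z) :=
      P_sub hclosed hbdd hne hu hsIcc htIcc
    have hkey : P T u t - P T u s - (t - s) • u t = ∫ z in s..t, (u (g T z) - u t) := by
      rw [integral_sub hint1 hint2, intervalIntegral.integral_const, hPsub]
    have hbound : ‖∫ z in s..t, (u (g T z) - u t)‖ ≤ (ε / 2) * |t - s| := by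
      refine norm_integral_le_of_norm_le_const (fun z hz => ?_)
      have hgz : dist (g T z) t < δ := by
        rw [Real.dist_eq] at hd ⊢
        rcases le_total s t with hst | hst
        · rw [uIoc_of_le hst] at hz
          have h1 : s ≤ g T z := le_g hbdd hsT (le_of_lt hz.1)
          have h2 : g T z ≤ z := by
            have := g_le hclosed hbdd hne z
            rwa [max_eq_left (hsIcc.1.trans (le_of_lt hz.1))] at this
          rw [abs_lt] at hd ⊢
          exact ⟨by linarith [hd.1], by linarith [hz.2]⟩
        · rw [uIoc_of_ge hst] at hz
          have h1 : t ≤ g T z := le_g hbdd htT (le_of_lt hz.1)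
          have h2 : g T z ≤ z := by
            have := g_le hclosed hbdd hne z
            rwa [max_eq_left (htIcc.1.trans (le_of_lt hz.1))] at this
          rw [abs_lt] at hd ⊢
          exact ⟨by linarith [hz.1], by linarith [hd.2, hz.2]⟩
      have := hδ' (g_mem hclosed hbdd hne z) hgz
      rw [dist_eq_norm] at this
      exact le_of_lt this
    rw [dist_eq_norm]
    have heq : (t - s)⁻¹ • (P T u t - P T u s) - u t
        = (t - s)⁻¹ • (P T u t - P T u s - (t - s) • u t) := by
      conv_rhs => rw [smul_sub, smul_smul, inv_mul_cancel₀ hts, one_smul]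
    rw [heq, hkey, norm_smul, Real.norm_eq_abs, abs_inv]
    have habs : |t - s| ≠ 0 := fun h => hts (abs_eq_zero.1 h)
    have habs' : 0 < |t - s| := lt_of_le_of_ne (abs_nonneg _) (Ne.symm habs)
    calc |t - s|⁻¹ * ‖∫ z in s..t, (u (g T z) - u t)‖
        ≤ |t - s|⁻¹ * ((ε / 2) * |t - s|) := by
          exact mul_le_mul_of_nonneg_left hbound (by positivity)
      _ = ε / 2 := by field_simp
      _ < ε := by linarith
  · -- right-scattered case
    unfold HasDeltaDerivAt
    set σ := tsSigma T t with hσdef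
    have hσT : σ ∈ T := sigma_mem hclosed hbdd hne
    have hσIcc := subset_Icc hbdd hne hσT
    have hσt : σ - t ≠ 0 := sub_ne_zero.2 (ne_of_gt hσ)
    have hsub : T \ {σ} ⊆ Icc (sInf T) (sSup T) :=
      fun z hz => subset_Icc hbdd hne hz.1
    have hcwP : ContinuousWithinAt (P T u) (T \ {σ}) t :=
      (P_continuousWithinAt hclosed hbdd hne hu htIcc).mono hsub
    have hcwf : ContinuousWithinAt (fun s => (σ - s)⁻¹ • (P T u σ - P T u s)) (T \ {σ}) t := by
      refine ContinuousWithinAt.smul ?_ ?_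
      · exact ((continuous_const.sub continuous_id).continuousAt.continuousWithinAt).inv₀ hσt
      · exact continuousWithinAt_const.sub hcwP
    have hval : (σ - t)⁻¹ • (P T u σ - P T u t) = u t := by
      rw [P_gap hclosed hbdd hne hu htT hσ, smul_smul, inv_mul_cancel₀ hσt, one_smul]
    have h2 : (fun s => (σ - s)⁻¹ • (P T u σ - P T u s)) t = u t := hval
    have h3 := hcwf
    unfold ContinuousWithinAt at h3
    rwa [h2] at h3

end deriv

section unique

variable {E : Type*} [NormedAddCommGroup E] [NormedSpace ℝ E]

lemma hasDeltaDerivAt_sub {V U : ℝ → E} {t : ℝ} {L L' : E}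
    (hV : HasDeltaDerivAt T V t L) (hU : HasDeltaDerivAt T U t L') :
    HasDeltaDerivAt T (fun s => V s - U s) t (L - L') := by
  unfold HasDeltaDerivAt at *
  have := hV.sub hU
  refine Tendsto.congr (fun s => ?_) this
  rw [← smul_sub]
  congr 1
  exact sub_sub_sub_comm _ _ _ _

lemma cwa_of_deriv (hclosed : IsClosed T) (hbdd : Bornology.IsBounded T) (hne : T.Nonempty)
    {W : ℝ → E} {t : ℝ} {L : E} (htT : t ∈ T) (h : HasDeltaDerivAt T W t L) :
    ContinuousWithinAt W T t := by
  unfold HasDeltaDerivAt at h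
  rcases eq_or_lt_of_le (le_sigma hclosed hbdd hne htT) with hσ | hσ
  · rw [← hσ] at h
    rw [← continuousWithinAt_diff_self]
    have hfac : Tendsto (fun s => t - s) (𝓝[T \ {t}] t) (𝓝 0) := by
      have : Tendsto (fun s : ℝ => t - s) (𝓝 t) (𝓝 (t - t)) :=
        (continuous_const.sub continuous_id).tendsto t
      rw [sub_self] at this
      exact this.mono_left nhdsWithin_le_nhds
    have h2 : Tendsto (fun s => (t - s) • ((t - s)⁻¹ • (W t - W s)))
        (𝓝[T \ {t}] t) (𝓝 ((0:ℝ) • L)) := hfac.smul h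
    rw [zero_smul] at h2
    have h3 : Tendsto (fun s => W t - W s) (𝓝[T \ {t}] t) (𝓝 0) := by
      refine h2.congr' ?_
      filter_upwards [eventually_mem_nhdsWithin] with s hs
      rw [smul_inv_smul₀ (sub_ne_zero.2 (fun hc => hs.2 (mem_singleton_iff.2 hc.symm)))]
    have h4 : Tendsto W (𝓝[T \ {t}] t) (𝓝 (W t - 0)) :=
      (tendsto_const_nhds.sub h3).congr (fun s => sub_sub_cancel _ _)
    rwa [sub_zero] at h4
  · set σ := tsSigma T t with hσdef
    have htne : t ≠ σ := ne_of_lt hσ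
    have htmem : t ∈ T \ {σ} := ⟨htT, fun hc => htne (mem_singleton_iff.1 hc)⟩
    have hfac : Tendsto (fun s => σ - s) (𝓝[T \ {σ}] t) (𝓝 (σ - t)) :=
      ((continuous_const.sub continuous_id).tendsto t).mono_left nhdsWithin_le_nhds
    have h2 : Tendsto (fun s => (σ - s) • ((σ - s)⁻¹ • (W σ - W s)))
        (𝓝[T \ {σ}] t) (𝓝 ((σ - t) • L)) := hfac.smul h
    have h3 : Tendsto (fun s => W σ - W s) (𝓝[T \ {σ}] t) (𝓝 ((σ - t) • L)) := by
      refine h2.congr' ?_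
      filter_upwards [eventually_mem_nhdsWithin] with s hs
      rw [smul_inv_smul₀ (sub_ne_zero.2 (fun hc => hs.2 (mem_singleton_iff.2 hc.symm)))]
    have h4 : Tendsto W (𝓝[T \ {σ}] t) (𝓝 (W σ - (σ - t) • L)) :=
      (tendsto_const_nhds.sub h3).congr (fun s => sub_sub_cancel _ _)
    have hpure : pure t ≤ 𝓝[T \ {σ}] t := pure_le_nhdsWithin htmem
    have h5 : W σ - (σ - t) • L = W t :=
      tendsto_nhds_unique (h4.mono_left hpure) (tendsto_pure_nhds W t)
    rw [h5] at h4
    have hle : 𝓝[T] t ≤ 𝓝[T \ {σ}] t := by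
      rw [nhdsWithin_le_iff]
      rw [mem_nhdsWithin]
      exact ⟨{σ}ᶜ, isOpen_compl_singleton, htne, fun z hz => ⟨hz.2, hz.1⟩⟩
    exact h4.mono_left hle

lemma jump_eq (hclosed : IsClosed T) (hbdd : Bornology.IsBounded T) (hne : T.Nonempty)
    {W : ℝ → E} {t : ℝ} (htT : t ∈ T) (hσ : t < tsSigma T t)
    (h : HasDeltaDerivAt T W t 0) : W (tsSigma T t) = W t := by
  have hcwa := cwa_of_deriv hclosed hbdd hne htT h
  unfold HasDeltaDerivAt at h
  set σ := tsSigma T t with hσdef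
  have htne : t ≠ σ := ne_of_lt hσ
  have htmem : t ∈ T \ {σ} := ⟨htT, fun hc => htne (mem_singleton_iff.1 hc)⟩
  have hnb : (𝓝[T \ {σ}] t).NeBot :=
    mem_closure_iff_nhdsWithin_neBot.1 (subset_closure htmem)
  have hfac : Tendsto (fun s => σ - s) (𝓝[T \ {σ}] t) (𝓝 (σ - t)) :=
    ((continuous_const.sub continuous_id).tendsto t).mono_left nhdsWithin_le_nhds
  have h2 : Tendsto (fun s => (σ - s) • ((σ - s)⁻¹ • (W σ - W s)))
      (𝓝[T \ {σ}] t) (𝓝 ((σ - t) • (0:E))) := hfac.smul h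
  rw [smul_zero] at h2
  have h3 : Tendsto (fun s => W σ - W s) (𝓝[T \ {σ}] t) (𝓝 0) := by
    refine h2.congr' ?_
    filter_upwards [eventually_mem_nhdsWithin] with s hs
    rw [smul_inv_smul₀ (sub_ne_zero.2 (fun hc => hs.2 (mem_singleton_iff.2 hc.symm)))]
  have h5 : Tendsto W (𝓝[T \ {σ}] t) (𝓝 (W t)) :=
    hcwa.mono_left (nhdsWithin_mono _ diff_subset)
  have h6 : Tendsto (fun s => W σ - W s) (𝓝[T \ {σ}] t) (𝓝 (W σ - W t)) :=
    tendsto_const_nhds.sub h5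
  have := tendsto_nhds_unique h6 h3
  exact sub_eq_zero.1 this
  
lemma norm_le_eps (hclosed : IsClosed T) (hbdd : Bornology.IsBounded T) (hne : T.Nonempty)
    {W : ℝ → E} (hW0 : W (sInf T) = 0)
    (hWd : ∀ t ∈ tsK T, HasDeltaDerivAt T W t (0:E))
    {ε : ℝ} (hε : 0 < ε) : ∀ t ∈ T, ‖W t‖ ≤ ε * (t - sInf T) := by
  have haT := mem_a hclosed hbdd hne
  have hbT := mem_b hclosed hbdd hne
  set a := sInf T with ha
  set b := sSup T with hb
  set S := {t | t ∈ T ∧ ∀ s ∈ T, s ≤ t → ‖W s‖ ≤ ε * (s - a)} with hS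
  have hSsub : S ⊆ T := fun t ht => ht.1
  have haS : a ∈ S := by
    refine ⟨haT, fun s hs hsle => ?_⟩
    have : s = a := le_antisymm hsle (csInf_le hbdd.bddBelow hs)
    rw [this, hW0]
    simp
  have hSne : S.Nonempty := ⟨a, haS⟩
  have hSbdd : BddAbove S := hbdd.bddAbove.mono hSsub
  set c := sSup S with hc
  have hcT : c ∈ T := by
    have h1 : c ∈ closure S := csSup_mem_closure hSne hSbdd
    exact hclosed.closure_eq ▸ (closure_mono hSsub h1)
  have hlow : ∀ s ∈ T, s < c → ‖W s‖ ≤ ε * (s - a) := by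
    intro s hs hslt
    obtain ⟨t', ht'S, hlt⟩ := exists_lt_of_lt_csSup hSne hslt
    exact ht'S.2 s hs (le_of_lt hlt)
  have hcS : c ∈ S := by
    by_cases hcmem : c ∈ S
    · exact hcmem
    · exfalso
      have hcK : c ∈ tsK T := by
        rcases mem_tsK_or hbdd hne hcT with h | ⟨hcb, hρ⟩
        · exact h
        · exfalso
          have hbns : b ∉ S := fun hbs => hcmem (hcb ▸ hbs)
          have hSle : ∀ s ∈ S, s ≤ tsRho T b := by
            intro s hs
            have hsT := hSsub hs
            have hsb : s ≤ b := le_csSup hbdd.bddAbove hsT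
            have hsb' : s < b := lt_of_le_of_ne hsb (fun h => hbns (h ▸ hs))
            by_contra hcon
            push_neg at hcon
            have : s ∈ T ∩ Ioo (tsRho T b) b := ⟨hsT, hcon, hsb'⟩
            rw [rho_b_gap hbdd hne] at this
            exact this.elim
          have : c ≤ tsRho T b := csSup_le hSne hSle
          rw [hcb] at this
          linarith
      have hWc := cwa_of_deriv hclosed hbdd hne hcT (hWd c hcK)
      have hccl : c ∈ closure S := csSup_mem_closure hSne hSbdd
      have hnb : (𝓝[S] c).NeBot := mem_closure_iff_nhdsWithin_neBot.1 hccl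
      have h1 : Tendsto (fun s => ‖W s‖) (𝓝[S] c) (𝓝 ‖W c‖) :=
        (hWc.mono_left (nhdsWithin_mono _ hSsub)).norm
      have h2 : Tendsto (fun s => ε * (s - a)) (𝓝[S] c) (𝓝 (ε * (c - a))) :=
        (((continuous_const.mul (continuous_id.sub continuous_const))).tendsto c).mono_left
          nhdsWithin_le_nhds
      have hWcle : ‖W c‖ ≤ ε * (c - a) := by
        refine le_of_tendsto_of_tendsto h1 h2 ?_
        filter_upwards [eventually_mem_nhdsWithin] with s hs
        exact hs.2 s hs.1 le_rfl
      refine hcmem ⟨hcT, fun s hs hsle => ?_⟩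
      rcases eq_or_lt_of_le hsle with heq | hlt
      · rw [heq]; exact hWcle
      · exact hlow s hs hlt
  have hcb : c = b := by
    by_contra hne'
    have hclt : c < b := lt_of_le_of_ne (le_csSup hbdd.bddAbove hcT) hne'
    have hcK : c ∈ tsK T := mem_tsK_of_lt hbdd hne hcT hclt
    have hder := hWd c hcK
    have hca : a ≤ c := csInf_le hbdd.bddBelow hcT
    rcases eq_or_lt_of_le (le_sigma hclosed hbdd hne hcT) with hσ | hσ
    · -- right-dense
      unfold HasDeltaDerivAt at hder
      rw [← hσ] at hder
      rw [Metric.tendsto_nhdsWithin_nhds] at hder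
      obtain ⟨δ, hδ, hδ'⟩ := hder ε hε
      obtain ⟨d, hdT, hdc, hdlt⟩ := right_dense_approx hclosed hbdd hne hclt hσ.symm hδ
      have hdS : d ∈ S := by
        refine ⟨hdT, fun s hs hsle => ?_⟩
        rcases le_or_gt s c with hsc | hsc
        · exact hcS.2 s hs hsc
        · have hsne : s ≠ c := ne_of_gt hsc
          have hd2 := hδ' (⟨hs, fun hmem => hsne (mem_singleton_iff.1 hmem)⟩ : s ∈ T \ {c})
            (by rw [Real.dist_eq, abs_of_pos (by linarith : (0:ℝ) < s - c)]; linarith)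
          rw [dist_zero_right] at hd2
          have hcs : c - s ≠ 0 := sub_ne_zero.2 (Ne.symm hsne)
          have hnorm : ‖W c - W s‖ ≤ ε * (s - c) := by
            have heq : W c - W s = (c - s) • ((c - s)⁻¹ • (W c - W s)) :=
              (smul_inv_smul₀ hcs _).symm
            rw [heq, norm_smul, Real.norm_eq_abs, abs_of_neg (by linarith : c - s < 0)]
            have : -(c - s) = s - c := by ring
            rw [this]
            have h0 : (0:ℝ) ≤ s - c := by linarith
            nlinarith [hd2, h0, norm_nonneg ((c - s)⁻¹ • (W c - W s))]
          have hWc : ‖W c‖ ≤ ε * (c - a) := hcS.2 c hcT le_rfl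
          calc ‖W s‖ = ‖W c - (W c - W s)‖ := by rw [sub_sub_cancel]
            _ ≤ ‖W c‖ + ‖W c - W s‖ := norm_sub_le _ _
            _ ≤ ε * (c - a) + ε * (s - c) := add_le_add hWc hnorm
            _ = ε * (s - a) := by ring
      have : d ≤ c := le_csSup hSbdd hdS
      linarith
    · -- right-scattered
      have hjump : W (tsSigma T c) = W c := jump_eq hclosed hbdd hne hcT hσ hder
      have hσT : tsSigma T c ∈ T := sigma_mem hclosed hbdd hne
      have hσS : tsSigma T c ∈ S := by
        refine ⟨hσT, fun s hs hsle => ?_⟩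
        rcases le_or_gt s c with hsc | hsc
        · exact hcS.2 s hs hsc
        · have hseq : s = tsSigma T c := by
            by_contra hcon
            have : s ∈ T ∩ Ioo c (tsSigma T c) := ⟨hs, hsc, lt_of_le_of_ne hsle hcon⟩
            rw [sigma_gap hbdd] at this
            exact this.elim
          rw [hseq, hjump]
          have hWc : ‖W c‖ ≤ ε * (c - a) := hcS.2 c hcT le_rfl
          have : ε * (c - a) ≤ ε * (s - a) := by nlinarith
          linarith [hseq ▸ this]
      have : tsSigma T c ≤ c := le_csSup hSbdd hσS
      linarith
  intro t ht
  exact hcS.2 t ht (hcb ▸ le_csSup hbdd.bddAbove ht)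

lemma eq_zero_of_deriv_zero (hclosed : IsClosed T) (hbdd : Bornology.IsBounded T)
    (hne : T.Nonempty) {W : ℝ → E} (hW0 : W (sInf T) = 0)
    (hWd : ∀ t ∈ tsK T, HasDeltaDerivAt T W t (0:E)) : ∀ t ∈ T, W t = 0 := by
  intro t ht
  have hta : sInf T ≤ t := csInf_le hbdd.bddBelow ht
  rw [← norm_le_zero_iff]
  by_contra hcon
  push_neg at hcon
  have hpos : 0 < ‖W t‖ := hcon
  have hD : (0:ℝ) < 2 * (t - sInf T) + 2 := by linarith
  have hε : 0 < ‖W t‖ / (2 * (t - sInf T) + 2) := div_pos hpos hD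
  have h2 := norm_le_eps hclosed hbdd hne hW0 hWd hε t ht
  rw [div_mul_eq_mul_div, le_div_iff₀ hD] at h2
  nlinarith [hpos, hta]

end unique

end TSAux

theorem exists_unique_cauchy_delta_antiderivative
    (T : Set ℝ) (hclosed : IsClosed T) (hbdd : Bornology.IsBounded T)
    (hcard : 3 ≤ T.ncard)
    (n : ℕ) (u : ℝ → EuclideanSpace ℝ (Fin n)) (hu : RdContinuous T u) :
    ∃ U : ℝ → EuclideanSpace ℝ (Fin n),
      (U (sInf T) = 0 ∧ ∀ t ∈ tsK T, HasDeltaDerivAt T U t (u t)) ∧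
      ∀ V : ℝ → EuclideanSpace ℝ (Fin n),
        (V (sInf T) = 0 ∧ ∀ t ∈ tsK T, HasDeltaDerivAt T V t (u t)) →
        ∀ t ∈ T, V t = U t := by
  have hne : T.Nonempty := Set.nonempty_of_ncard_ne_zero (by omega)
  have hP0 : TSAux.P T u (sInf T) = 0 := intervalIntegral.integral_same
  refine ⟨TSAux.P T u, ⟨hP0, fun t ht => TSAux.hasDeltaDerivAt_P hclosed hbdd hne hu ht⟩, ?_⟩
  rintro V ⟨hV0, hVd⟩ t ht
  have hW0 : (fun s => V s - TSAux.P T u s) (sInf T) = 0 := by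
    simp only [hV0, hP0, sub_zero]
  have hWd : ∀ t' ∈ tsK T, HasDeltaDerivAt T (fun s => V s - TSAux.P T u s) t' 0 := by
    intro t' ht'
    have := TSAux.hasDeltaDerivAt_sub (hVd t' ht')
      (TSAux.hasDeltaDerivAt_P hclosed hbdd hne hu ht')
    rwa [sub_self] at this
  have := TSAux.eq_zero_of_deriv_zero hclosed hbdd hne hW0 hWd t ht
  exact sub_eq_zero.1 this
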